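/- Let S = {v_1, ..., v_n} be a tight frame in ℝ^k that locally maximizes F(S) = ∑_{L ∈ C([n],k)} |det(v_{i_1}, ..., v_{i_k})| (the volume of the zonotope ∑[0, v_i]) among tight frames. Then the vectors of S are in general position: every k of them are linearly independent, i.e., det(v_{i_1}, ..., v_{i_k}) ≠ 0 for every k-element subset {i_1, ..., i_k} ⊆ [n]. -/

import Mathlib

open Matrix Submodule Set Module Filter

/-- Shephard's formula for the volume of the zonotope `∑ᵢ [0, vᵢ] ⊆ ℝ^k`. -/
noncomputable def zonVol {n k : ℕ} (v : Fin n → Fin k → ℝ) : ℝ :=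
  ∑ L : {s : Finset (Fin n) // s.card = k},
    |Matrix.det (Matrix.of fun a b : Fin k => v (L.1.orderIsoOfFin L.2 b) a)|

section Helpers
variable {k : ℕ}

lemma det_col_eq_zero_iff (f : Fin k → Fin k → ℝ) :
    (Matrix.of fun a b : Fin k => f b a).det = 0 ↔ ¬ LinearIndependent ℝ f := by
  constructor
  · intro h hli
    obtain ⟨g, hg0, hg⟩ := (Matrix.exists_mulVec_eq_zero_iff).2 h
    have : ∑ b, g b • f b = 0 := by
      funext a
      have := congrFun hg a
      simpa [Matrix.mulVec, dotProduct, Finset.sum_apply, mul_comm] using this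
    have := Fintype.linearIndependent_iff.1 hli g this
    exact hg0 (funext fun b => this b)
  · intro h
    obtain ⟨g, hg, i, hi⟩ := Fintype.not_linearIndependent_iff.1 h
    refine (Matrix.exists_mulVec_eq_zero_iff).1 ⟨g, fun h0 => hi (congrFun h0 i), ?_⟩
    funext a
    have := congrFun hg a
    simpa [Matrix.mulVec, dotProduct, Finset.sum_apply, mul_comm] using this

lemma det_col_ne_zero_of_finrank (f : Fin k → Fin k → ℝ)
    (h : Module.finrank ℝ (span ℝ (Set.range f)) = k) :
    (Matrix.of fun a b : Fin k => f b a).det ≠ 0 := by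
  intro h0
  have hli : LinearIndependent ℝ f := by
    rw [linearIndependent_iff_card_eq_finrank_span]
    simp only [Set.finrank, Fintype.card_fin]
    exact h.symm
  exact (det_col_eq_zero_iff f).1 h0 hli

lemma finrank_span_le (s : Set (Fin k → ℝ)) : Module.finrank ℝ (span ℝ s) ≤ k := by
  simpa [Module.finrank_fin_fun] using (span ℝ s).finrank_le

lemma span_top_of_det_ne {n : ℕ} (w : Fin n → Fin k → ℝ)
    (h : (∑ i, Matrix.vecMulVec (w i) (w i)).det ≠ 0) :
    Submodule.span ℝ (Set.range w) = ⊤ := by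
  set A : Matrix (Fin k) (Fin k) ℝ := ∑ i, Matrix.vecMulVec (w i) (w i) with hA
  have hunit : IsUnit A.det := isUnit_iff_ne_zero.2 h
  rw [eq_top_iff']
  intro y
  have hy : A *ᵥ (A⁻¹ *ᵥ y) = y := by
    rw [Matrix.mulVec_mulVec, Matrix.mul_nonsing_inv _ hunit, Matrix.one_mulVec]
  rw [← hy]
  set x := A⁻¹ *ᵥ y
  have : A *ᵥ x = ∑ i, (w i ⬝ᵥ x) • w i := by
    funext a
    simp [hA, Matrix.mulVec, dotProduct, Finset.sum_apply, Matrix.sum_apply,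
      Matrix.vecMulVec_apply, Finset.sum_mul, Finset.mul_sum]
    rw [Finset.sum_comm]
    exact Finset.sum_congr rfl fun i _ => Finset.sum_congr rfl fun b _ => by ring
  rw [this]
  exact Submodule.sum_mem _ fun i _ =>
    Submodule.smul_mem _ _ (Submodule.subset_span (Set.mem_range_self i))

lemma sgn_mul_self (x : ℝ) : Real.sign x * x = |x| := by
  rcases lt_trichotomy x 0 with h | h | h
  · rw [Real.sign_of_neg h, abs_of_neg h]; ring
  · simp [h]
  · rw [Real.sign_of_pos h, abs_of_pos h]; ring

lemma sign_mul_le (x y : ℝ) : Real.sign x * y ≤ |y| := by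
  rcases Real.sign_apply_eq x with h | h | h <;> rw [h]
  · nlinarith [neg_abs_le y, abs_nonneg y]
  · simp [abs_nonneg]
  · simpa using le_abs_self y

lemma sqrt_le_half (x : ℝ) (hx : 0 ≤ x) : Real.sqrt x ≤ (1 + x) / 2 := by
  rw [show (1 + x) / 2 = Real.sqrt (((1 + x) / 2) ^ 2) from (Real.sqrt_sq (by positivity)).symm]
  exact Real.sqrt_le_sqrt (by nlinarith [sq_nonneg (1 - x)])

end Helpers

section Part2
variable {n k : ℕ} (v : Fin n → Fin k → ℝ)

lemma range_iso_image (M : Finset (Fin n)) (hM : M.card = k) :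
    Set.range (fun b : Fin k => v (M.orderIsoOfFin hM b)) = v '' ↑M := by
  have : (fun b : Fin k => v (M.orderIsoOfFin hM b)) = v ∘ (M.orderEmbOfFin hM) := by
    funext b; simp [Finset.coe_orderIsoOfFin_apply]
  rw [this, Set.range_comp, Finset.range_orderEmbOfFin]

/-- determinant of the perturbed column matrix is affine in `t`. -/
lemma det_affine (j : Fin n) (u : Fin k → ℝ) (M : Finset (Fin n)) (hM : M.card = k) :
    ∃ d : ℝ, ∀ t : ℝ,
      (Matrix.of fun a b : Fin k => (Function.update v j (v j + t • u)) (M.orderIsoOfFin hM b) a).det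
        = (Matrix.of fun a b : Fin k => v (M.orderIsoOfFin hM b) a).det + t * d := by
  by_cases hj : j ∈ M
  · set e := M.orderIsoOfFin hM with he
    set b₁ : Fin k := e.symm ⟨j, hj⟩ with hb₁
    set Y : Matrix (Fin k) (Fin k) ℝ := (Matrix.of fun a b : Fin k => v (e b) a)ᵀ with hY
    refine ⟨(Y.updateRow b₁ u).det, fun t => ?_⟩
    have key : ∀ b : Fin k, ((e b : Fin n) = j) ↔ b = b₁ := by
      intro b
      constructor
      · intro h
        have : e b = ⟨j, hj⟩ := Subtype.ext h
        rw [hb₁, ← this, OrderIso.symm_apply_apply]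
      · rintro rfl
        simp [hb₁]
    have hmat : (Matrix.of fun a b : Fin k =>
        (Function.update v j (v j + t • u)) (e b) a)ᵀ = Y.updateRow b₁ (v j + t • u) := by
      ext b a
      rw [Matrix.transpose_apply, Matrix.updateRow_apply]
      by_cases hb : b = b₁
      · rw [if_pos hb, Matrix.of_apply, Function.update_apply, if_pos ((key b).2 hb)]
      · rw [if_neg hb, Matrix.of_apply, Function.update_apply,
          if_neg (fun h => hb ((key b).1 h))]
        rfl
    have hYrow : Y.updateRow b₁ (v j) = Y := by
      have : v j = Y b₁ := by
        funext a
        simp only [hY, Matrix.transpose_apply, Matrix.of_apply]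
        rw [(key b₁).2 rfl]
      rw [this, Matrix.updateRow_eq_self]
    calc (Matrix.of fun a b : Fin k =>
        (Function.update v j (v j + t • u)) (e b) a).det
        = (Y.updateRow b₁ (v j + t • u)).det := by rw [← Matrix.det_transpose, hmat]
      _ = (Y.updateRow b₁ (v j)).det + t * (Y.updateRow b₁ u).det := by
          rw [Matrix.det_updateRow_add, Matrix.det_updateRow_smul]
      _ = (Matrix.of fun a b : Fin k => v (e b) a).det + t * (Y.updateRow b₁ u).det := by
          rw [hYrow, hY, Matrix.det_transpose]
  · refine ⟨0, fun t => ?_⟩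
    have : ∀ b : Fin k, (Function.update v j (v j + t • u)) (M.orderIsoOfFin hM b)
        = v (M.orderIsoOfFin hM b) := by
      intro b
      apply Function.update_of_ne
      intro h
      exact hj (h ▸ (M.orderIsoOfFin hM b).2)
    simp only [this, mul_zero, add_zero]

end Part2

section Core
variable {n k : ℕ}

lemma core (v : Fin n → Fin k → ℝ)
    (hv : ∑ i, Matrix.vecMulVec (v i) (v i) = (1 : Matrix (Fin k) (Fin k) ℝ))
    (hmax : ∃ U ∈ nhds v, ∀ w ∈ U, Submodule.span ℝ (Set.range w) = ⊤ →
      zonVol w ≤ zonVol v * Real.sqrt (Matrix.det (∑ i, Matrix.vecMulVec (w i) (w i))))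
    (T : Finset (Fin n)) (hT : T.card = k)
    (hrank : Module.finrank ℝ (span ℝ (v '' ↑T)) + 1 = k) : False := by
  classical
  obtain ⟨U, hU, hUmax⟩ := hmax
  set g : Fin k → Fin k → ℝ := fun b => v (T.orderIsoOfFin hT b) with hgdef
  have hgr : Set.range g = v '' ↑T := range_iso_image v T hT
  -- the family g is dependent
  have hnli : ¬ LinearIndependent ℝ g := by
    intro h
    have := linearIndependent_iff_card_eq_finrank_span.1 h
    rw [Set.finrank, hgr] at this
    simp only [Fintype.card_fin] at this
    omega
  -- pick b₀ with g b₀ in span of the others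
  have := (not_iff_not.2 (linearIndependent_iff_notMem_span (K := ℝ) (v := g))).1 hnli
  push_neg at this
  obtain ⟨b₀, hb₀⟩ := this
  have huniv : insert b₀ (Set.univ \ {b₀}) = (Set.univ : Set (Fin k)) := by
    rw [Set.insert_diff_singleton]
    exact Set.insert_eq_self.2 (Set.mem_univ b₀)
  have hrange_ins : Set.range g = insert (g b₀) (g '' (Set.univ \ {b₀})) := by
    rw [← Set.image_univ]
    conv_lhs => rw [← huniv]
    rw [Set.image_insert_eq]
  have hspan_eq : span ℝ (g '' (Set.univ \ {b₀})) = span ℝ (Set.range g) := by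
    rw [hrange_ins, Submodule.span_insert_eq_span hb₀]
  -- pick u outside the span of g
  have hne_top : span ℝ (Set.range g) ≠ ⊤ := by
    intro h
    rw [hgr] at h
    have := congrArg (fun s : Submodule ℝ (Fin k → ℝ) => Module.finrank ℝ s) h
    rw [finrank_top, Module.finrank_fin_fun] at this
    omega
  obtain ⟨u, hu⟩ : ∃ u, u ∉ span ℝ (Set.range g) := by
    by_contra h
    push_neg at h
    exact hne_top (eq_top_iff'.2 h)
  set j : Fin n := ↑(T.orderIsoOfFin hT b₀) with hjdef
  have hj : j ∈ T := (T.orderIsoOfFin hT b₀).2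
  have key : ∀ b : Fin k, ((T.orderIsoOfFin hT b : Fin n) = j) ↔ b = b₀ := by
    intro b
    constructor
    · intro h
      exact (T.orderIsoOfFin hT).injective (Subtype.ext h)
    · rintro rfl; rfl
  have hgb₀ : g b₀ = v j := rfl
  -- updating g at b₀ with a vector outside its span has full rank
  have hupdate : ∀ x : Fin k → ℝ, x ∉ span ℝ (Set.range g) →
      Module.finrank ℝ (span ℝ (Set.range (Function.update g b₀ x))) = k := by
    intro x hx
    have hfr : Set.range (Function.update g b₀ x) = insert x (g '' (Set.univ \ {b₀})) := by
      rw [← Set.image_univ]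
      conv_lhs => rw [← huniv]
      rw [Set.image_insert_eq, Function.update_self]
      congr 1
      apply Set.image_congr
      intro b hb
      exact Function.update_of_ne (fun h => hb.2 h) _ _
    have hxmem : x ∈ span ℝ (Set.range (Function.update g b₀ x)) :=
      subset_span ⟨b₀, Function.update_self _ _ _⟩
    have hle : span ℝ (Set.range g) ≤ span ℝ (Set.range (Function.update g b₀ x)) := by
      rw [hfr, ← hspan_eq]
      exact span_mono (Set.subset_insert _ _)
    have hlt : span ℝ (Set.range g) < span ℝ (Set.range (Function.update g b₀ x)) :=
      lt_of_le_of_ne hle (fun h => hx (by rw [h]; exact hxmem))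
    have h6 := Submodule.finrank_lt_finrank_of_lt hlt
    have h7 := finrank_span_le (Set.range (Function.update g b₀ x))
    have h8 : Module.finrank ℝ (span ℝ (Set.range g)) + 1 = k := by rw [hgr]; exact hrank
    omega
  -- the affine coefficients of all the determinants
  choose d hd using fun M : {s : Finset (Fin n) // s.card = k} => det_affine v j u M.1 M.2
  set P : {s : Finset (Fin n) // s.card = k} → ℝ :=
    fun M => (Matrix.of fun a b : Fin k => v ((M.1.orderIsoOfFin M.2) b) a).det with hPdef
  set T' : {s : Finset (Fin n) // s.card = k} := ⟨T, hT⟩ with hT'def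
  have hPT0 : P T' = 0 := (det_col_eq_zero_iff g).2 hnli
  -- the matrix for T at t = 1 is nonsingular, hence d T' ≠ 0
  have heq1 : (fun b : Fin k => (Function.update v j (v j + (1:ℝ) • u)) (T.orderIsoOfFin hT b))
      = Function.update g b₀ (v j + (1:ℝ) • u) := by
    funext b
    rw [Function.update_apply, Function.update_apply]
    by_cases hb : b = b₀
    · rw [if_pos ((key b).2 hb), if_pos hb]
    · rw [if_neg (fun h => hb ((key b).1 h)), if_neg hb]
  have hmem1 : v j + (1:ℝ) • u ∉ span ℝ (Set.range g) := by
    rw [one_smul]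
    intro hmem
    have hvj : v j ∈ span ℝ (Set.range g) := subset_span ⟨b₀, rfl⟩
    have : u ∈ span ℝ (Set.range g) := by
      have := Submodule.sub_mem _ hmem hvj
      simpa using this
    exact hu this
  have hne : (Matrix.of fun a b : Fin k =>
      (Function.update v j (v j + (1:ℝ) • u)) (T.orderIsoOfFin hT b) a).det ≠ 0 := by
    apply det_col_ne_zero_of_finrank
    rw [heq1]
    exact hupdate _ hmem1
  have hdTne : d T' ≠ 0 := by
    intro h0
    have h1 : (Matrix.of fun a b : Fin k =>
        (Function.update v j (v j + (1:ℝ) • u)) ((T.orderIsoOfFin hT) b) a).det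
        = P T' + 1 * d T' := hd T' 1
    rw [hPT0, h0, mul_zero, add_zero] at h1
    exact hne h1
  -- lower bound on the zonotope volume of the perturbed system, for every t
  set D : ℝ := ∑ M ∈ Finset.univ.erase T', Real.sign (P M) * d M with hDdef
  have hlow : ∀ t : ℝ, zonVol v + t * D + |t| * |d T'|
      ≤ zonVol (Function.update v j (v j + t • u)) := by
    intro t
    have e1 : zonVol (Function.update v j (v j + t • u))
        = ∑ M : {s : Finset (Fin n) // s.card = k}, |P M + t * d M| := by
      unfold zonVol
      exact Finset.sum_congr rfl fun M _ => by rw [hd M t]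
    have e2 : zonVol v = ∑ M ∈ Finset.univ.erase T', |P M| := by
      unfold zonVol
      rw [← Finset.add_sum_erase _ _ (Finset.mem_univ T')]
      have : |P T'| = 0 := by rw [hPT0, abs_zero]
      rw [show (|Matrix.det (Matrix.of fun a b : Fin k =>
        v ((T'.1.orderIsoOfFin T'.2) b) a)| : ℝ) = |P T'| from rfl, this, zero_add]
    rw [e1, ← Finset.add_sum_erase _ (fun M => |P M + t * d M|) (Finset.mem_univ T'),
      hPT0, zero_add, abs_mul]
    have e3 : ∀ M ∈ Finset.univ.erase T',
        |P M| + t * (Real.sign (P M) * d M) ≤ |P M + t * d M| := by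
      intro M _
      have h4 := sign_mul_le (P M) (P M + t * d M)
      rw [mul_add, sgn_mul_self] at h4
      nlinarith [h4]
    have e4 := Finset.sum_le_sum e3
    rw [Finset.sum_add_distrib, ← Finset.mul_sum] at e4
    rw [e2]
    linarith [e4]
  -- the frame operator of the perturbed system as a polynomial in t
  set B : Matrix (Fin k) (Fin k) ℝ :=
    Matrix.vecMulVec (v j) u + Matrix.vecMulVec u (v j) with hB
  set Cm : Matrix (Fin k) (Fin k) ℝ := Matrix.vecMulVec u u with hCm
  have hAt : ∀ t : ℝ, (∑ i, Matrix.vecMulVec (Function.update v j (v j + t • u) i)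
        (Function.update v j (v j + t • u) i))
      = (1 : Matrix (Fin k) (Fin k) ℝ) + t • B + (t * t) • Cm := by
    intro t
    ext a b
    have h1 : (1 : Matrix (Fin k) (Fin k) ℝ) a b = ∑ i, v i a * v i b := by
      rw [← hv]; simp [Matrix.sum_apply, Matrix.vecMulVec_apply]
    have h2 : ∑ i, (Function.update v j (v j + t • u) i a *
          Function.update v j (v j + t • u) i b - v i a * v i b)
        = Function.update v j (v j + t • u) j a *
          Function.update v j (v j + t • u) j b - v j a * v j b :=
      Finset.sum_eq_single_of_mem j (Finset.mem_univ j)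
        (fun i _ hij => by rw [Function.update_of_ne hij]; ring)
    rw [Finset.sum_sub_distrib] at h2
    have h3 : Function.update v j (v j + t • u) j = fun a => v j a + t * u a := by
      rw [Function.update_self]; funext a; simp
    rw [h3] at h2
    simp only [Matrix.sum_apply, Matrix.vecMulVec_apply, Matrix.add_apply,
      Matrix.smul_apply, smul_eq_mul, hB, hCm]
    linear_combination h2 - h1
  set Qm : Matrix (Fin k) (Fin k) (Polynomial ℝ) := Matrix.of fun a b =>
    Polynomial.C ((1 : Matrix (Fin k) (Fin k) ℝ) a b) + Polynomial.C (B a b) * Polynomial.X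
      + Polynomial.C (Cm a b) * Polynomial.X ^ 2 with hQm
  set Q : Polynomial ℝ := Qm.det with hQdef
  have hQ : ∀ t : ℝ, Q.eval t = (∑ i, Matrix.vecMulVec (Function.update v j (v j + t • u) i)
      (Function.update v j (v j + t • u) i)).det := by
    intro t
    rw [hAt t, hQdef]
    rw [show Qm.det.eval t = (Polynomial.evalRingHom t) Qm.det from rfl,
      RingHom.map_det (Polynomial.evalRingHom t) Qm]
    congr 1
    ext a b
    simp only [hQm, RingHom.mapMatrix_apply, Matrix.map_apply, Matrix.of_apply,
      Matrix.add_apply, Matrix.smul_apply, smul_eq_mul, Polynomial.eval_add,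
      Polynomial.eval_mul, Polynomial.eval_pow, Polynomial.eval_C, Polynomial.eval_X,
      Polynomial.coe_evalRingHom]
    ring
  have hw0 : Function.update v j (v j + (0:ℝ) • u) = v := by
    rw [zero_smul, add_zero, Function.update_eq_self]
  have hQ0 : Q.eval 0 = 1 := by
    rw [hQ 0, hw0, hv, Matrix.det_one]
  -- the eventual inequality
  have hcontw : Continuous (fun t : ℝ => Function.update v j (v j + t • u)) := by
    apply continuous_pi
    intro i
    simp only [Function.update_apply]
    by_cases hi : i = j
    · simp only [hi, if_pos rfl]
      exact continuous_const.add (continuous_id.smul continuous_const)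
    · simp only [if_neg hi]
      exact continuous_const
  have htend : Tendsto (fun t : ℝ => Function.update v j (v j + t • u)) (nhds 0) (nhds v) := by
    have := hcontw.tendsto 0
    rwa [hw0] at this
  have E1 : ∀ᶠ t : ℝ in nhds 0, Function.update v j (v j + t • u) ∈ U :=
    htend.eventually_mem hU
  have E2 : ∀ᶠ t : ℝ in nhds 0, 0 < Q.eval t := by
    have hc : ContinuousAt (fun t : ℝ => Q.eval t) 0 := (Polynomial.continuous Q).continuousAt
    have h01 : (0:ℝ) < Q.eval 0 := by rw [hQ0]; norm_num
    have := hc.preimage_mem_nhds (Ioi_mem_nhds h01)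
    filter_upwards [this] with t ht
    exact ht
  set R : Polynomial ℝ := Polynomial.C (zonVol v / 2) * (Q - 1) - Polynomial.C D * Polynomial.X
    with hRdef
  have hReval : ∀ t : ℝ, R.eval t = zonVol v / 2 * (Q.eval t - 1) - D * t := by
    intro t; simp [hRdef]
  have EKey : ∀ᶠ t : ℝ in nhds 0, |d T'| * |t| ≤ R.eval t := by
    filter_upwards [E1, E2] with t h1 h2
    have hdet : (∑ i, Matrix.vecMulVec (Function.update v j (v j + t • u) i)
        (Function.update v j (v j + t • u) i)).det ≠ 0 := by
      rw [← hQ t]; exact ne_of_gt h2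
    have hspanw := span_top_of_det_ne _ hdet
    have hup := hUmax _ h1 hspanw
    have hs : Real.sqrt ((∑ i, Matrix.vecMulVec (Function.update v j (v j + t • u) i)
        (Function.update v j (v j + t • u) i)).det) ≤ (1 + Q.eval t) / 2 := by
      rw [← hQ t]
      exact sqrt_le_half _ (le_of_lt (hQ t ▸ h2))
    have hzv : 0 ≤ zonVol v := Finset.sum_nonneg fun _ _ => abs_nonneg _
    have hchain : zonVol v + t * D + |t| * |d T'| ≤ zonVol v * ((1 + Q.eval t) / 2) :=
      le_trans (hlow t) (le_trans hup (mul_le_mul_of_nonneg_left hs hzv))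
    rw [hReval t]
    nlinarith [hchain]
  -- factor out t from R and take one-sided limits
  have hR0 : R.coeff 0 = 0 := by
    rw [Polynomial.coeff_zero_eq_eval_zero, hReval 0, hQ0]
    ring
  obtain ⟨R₁, hR₁⟩ := Polynomial.X_dvd_iff.2 hR0
  have hRt : ∀ t : ℝ, R.eval t = t * R₁.eval t := by
    intro t; rw [hR₁]; simp
  have hplus : |d T'| ≤ R₁.eval 0 := by
    have htd : Tendsto (fun t : ℝ => R₁.eval t) (nhdsWithin 0 (Set.Ioi 0))
        (nhds (R₁.eval 0)) :=
      ((Polynomial.continuous R₁).tendsto 0).mono_left nhdsWithin_le_nhds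
    refine ge_of_tendsto htd ?_
    filter_upwards [EKey.filter_mono nhdsWithin_le_nhds, self_mem_nhdsWithin] with t ht ht0
    rw [hRt t, abs_of_pos (show (0:ℝ) < t from ht0)] at ht
    have ht0' : (0:ℝ) < t := ht0
    nlinarith [ht]
  have hminus : |d T'| ≤ -R₁.eval 0 := by
    have htd : Tendsto (fun t : ℝ => -R₁.eval t) (nhdsWithin 0 (Set.Iio 0))
        (nhds (-R₁.eval 0)) :=
      (((Polynomial.continuous R₁).tendsto 0).mono_left nhdsWithin_le_nhds).neg
    refine ge_of_tendsto htd ?_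
    filter_upwards [EKey.filter_mono nhdsWithin_le_nhds, self_mem_nhdsWithin] with t ht ht0
    have ht0' : t < 0 := ht0
    rw [hRt t, abs_of_neg ht0'] at ht
    nlinarith [ht]
  have : |d T'| ≤ 0 := by linarith
  exact hdTne (abs_eq_zero.1 (le_antisymm this (abs_nonneg _)))

end Core

/-- Corollary `cor:lin_ind`: let `S = (v 1, ..., v n)` be a tight
frame in `ℝ^k` which locally maximizes the zonotope volume
`F(S) = ∑_{L} |det (v_{i₁}, ..., v_{i_k})|` among tight frames, in the sense
that `F(S') ≤ F(S) · √(det ∑ v'ᵢ ⊗ v'ᵢ)` for all frames `S'` in some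
neighborhood of `S`. Then the vectors of `S` are in general position: every `k`
of them are linearly independent, i.e. `det (v_{i₁}, ..., v_{i_k}) ≠ 0` for
every `k`-element subset. -/
theorem stmt_18 (n k : ℕ) (v : Fin n → Fin k → ℝ)
    (hv : ∑ i, Matrix.vecMulVec (v i) (v i) = (1 : Matrix (Fin k) (Fin k) ℝ))
    (hmax : ∃ U ∈ nhds v, ∀ w ∈ U, Submodule.span ℝ (Set.range w) = ⊤ →
      zonVol w ≤ zonVol v * Real.sqrt (Matrix.det (∑ i, Matrix.vecMulVec (w i) (w i))))
    (L : Finset (Fin n)) (hL : L.card = k) :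
    Matrix.det (Matrix.of fun a b : Fin k => v (L.orderIsoOfFin hL b) a) ≠ 0 := by
  classical
  intro hdet
  have hspan : Submodule.span ℝ (Set.range v) = ⊤ :=
    span_top_of_det_ne v (by rw [hv, Matrix.det_one]; norm_num)
  have hrk : Module.finrank ℝ (span ℝ (v '' ↑L)) < k := by
    rcases lt_or_eq_of_le (finrank_span_le (v '' ↑L)) with h | h
    · exact h
    · exfalso
      refine det_col_ne_zero_of_finrank (fun b => v (L.orderIsoOfFin hL b)) ?_ hdet
      rw [range_iso_image]
      exact h
  have main : ∀ m : ℕ, ∀ M : Finset (Fin n), 0 < m → M.card = k →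
      Module.finrank ℝ (span ℝ (v '' ↑M)) + m = k → False := by
    intro m
    induction m using Nat.strong_induction_on with
    | _ m IH =>
      intro M hm hM hrank
      obtain rfl | h1 : m = 1 ∨ 2 ≤ m := by omega
      · exact core v hv hmax M hM hrank
      · set r : ℕ := Module.finrank ℝ (span ℝ (v '' ↑M)) with hrdef
        have himg : Set.range (fun i : {x // x ∈ M} => v ↑i) = v '' ↑M := by
          rw [show (fun i : {x // x ∈ M} => v ↑i) = v ∘ Subtype.val from rfl, Set.range_comp,
            Subtype.range_val]
        have hnli : ¬ LinearIndependent ℝ (fun i : {x // x ∈ M} => v ↑i) := by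
          intro h
          have hc := linearIndependent_iff_card_eq_finrank_span.1 h
          rw [Set.finrank, himg, Fintype.card_coe, hM, ← hrdef] at hc
          omega
        have hnot := (not_iff_not.2 (linearIndependent_iff_notMem_span
          (K := ℝ) (v := fun i : {x // x ∈ M} => v ↑i))).1 hnli
        push_neg at hnot
        obtain ⟨x₀, hx₀⟩ := hnot
        have himg2 : (fun i : {x // x ∈ M} => v ↑i) '' (Set.univ \ {x₀})
            = v '' ↑(M.erase ↑x₀) := by
          ext y
          constructor
          · rintro ⟨i, ⟨-, hne⟩, rfl⟩
            exact ⟨↑i, Finset.mem_coe.2 (Finset.mem_erase.2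
              ⟨fun h => hne (Subtype.ext h), i.2⟩), rfl⟩
          · rintro ⟨i, hi, rfl⟩
            rw [Finset.mem_coe, Finset.mem_erase] at hi
            exact ⟨⟨i, hi.2⟩, ⟨Set.mem_univ _, fun h => hi.1 (congrArg Subtype.val h)⟩, rfl⟩
        have hx₀' : v ↑x₀ ∈ span ℝ (v '' ↑(M.erase ↑x₀)) := by rw [← himg2]; exact hx₀
        have hMins : (↑M : Set (Fin n)) = insert (↑x₀ : Fin n) ↑(M.erase ↑x₀) := by
          rw [← Finset.coe_insert, Finset.insert_erase x₀.2]
        have hspanM : span ℝ (v '' ↑(M.erase ↑x₀)) = span ℝ (v '' ↑M) := by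
          rw [hMins, Set.image_insert_eq, Submodule.span_insert_eq_span hx₀']
        obtain ⟨i₀, hi₀⟩ : ∃ i₀, v i₀ ∉ span ℝ (v '' ↑M) := by
          by_contra hcon
          push_neg at hcon
          have hle : Submodule.span ℝ (Set.range v) ≤ span ℝ (v '' ↑M) := by
            rw [Submodule.span_le]
            rintro _ ⟨i, rfl⟩
            exact hcon i
          rw [hspan] at hle
          have h5 : span ℝ (v '' ↑M) = ⊤ := top_le_iff.1 hle
          have h6 := congrArg (fun s : Submodule ℝ (Fin k → ℝ) => Module.finrank ℝ s) h5
          rw [finrank_top, Module.finrank_fin_fun, ← hrdef] at h6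
          omega
        have hi₀M : i₀ ∉ M := fun h => hi₀ (Submodule.subset_span (Set.mem_image_of_mem v h))
        set M' : Finset (Fin n) := insert i₀ (M.erase ↑x₀) with hM'def
        have hM' : M'.card = k := by
          rw [hM'def, Finset.card_insert_of_notMem
            (fun h => hi₀M (Finset.mem_of_mem_erase h)), Finset.card_erase_of_mem x₀.2]
          have : 0 < M.card := Finset.card_pos.2 ⟨↑x₀, x₀.2⟩
          omega
        have himg' : v '' ↑M' = insert (v i₀) (v '' ↑(M.erase ↑x₀)) := by
          rw [hM'def, Finset.coe_insert, Set.image_insert_eq]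
        have hlt : span ℝ (v '' ↑(M.erase ↑x₀)) < span ℝ (v '' ↑M') := by
          apply lt_of_le_of_ne
          · rw [himg']
            exact Submodule.span_mono (Set.subset_insert _ _)
          · intro h
            apply hi₀
            have hmem : v i₀ ∈ v '' ↑M' := by rw [himg']; exact Set.mem_insert _ _
            rw [← hspanM, h]
            exact Submodule.subset_span hmem
        have hlow' := Submodule.finrank_lt_finrank_of_lt hlt
        rw [hspanM, ← hrdef] at hlow'
        have hhigh : Module.finrank ℝ (span ℝ (v '' ↑M')) ≤ r + 1 := by
          rw [himg', Set.insert_eq, Submodule.span_union]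
          have h7 := Submodule.finrank_sup_add_finrank_inf_eq
            (span ℝ ({v i₀} : Set (Fin k → ℝ))) (span ℝ (v '' ↑(M.erase ↑x₀)))
          have h8 : Module.finrank ℝ (span ℝ ({v i₀} : Set (Fin k → ℝ))) = 1 :=
            finrank_span_singleton (fun h0 => hi₀ (by rw [h0]; exact Submodule.zero_mem _))
          have h9 : Module.finrank ℝ (span ℝ (v '' ↑(M.erase ↑x₀))) = r := by
            rw [hspanM, ← hrdef]
          omega
        have h10 := finrank_span_le (v '' ↑M')
        set r' := Module.finrank ℝ (span ℝ (v '' ↑M')) with hr'def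
        exact IH (k - r') (by omega) M' (by omega) hM' (by omega)
  exact main (k - Module.finrank ℝ (span ℝ (v '' ↑L))) L (by omega) hL (by omega)
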